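/- Let φ : [0,1] → ℝ be a continuous function of bounded variation with φ(0) = 0 and total variation V_0^1 φ = 1, and suppose ω = (x_k)_{k≥1} ⊆ [0,1] and (ε_k)_{k≥1} ⊆ {−1,+1} are sequences such that for every x ∈ [0,1], (1/N)·Σ_{k=1}^N χ_{[0,x)}(x_k) → v(x) and (1/N)·Σ_{k=1}^N ε_k·χ_{[0,x)}(x_k) → φ(x) as N → ∞, where v(x) = V_0^x φ. Then the discrepancy D_N(ω;φ) = sup_{0 ≤ a < b ≤ 1} |(1/N)·Σ_{k=1}^N ε_k·χ_{[a,b)}(x_k) − (φ(b) − φ(a))| satisfies D_N(ω;φ) → 0 as N → ∞. -/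

import Mathlib

open Filter Finset Set ENNReal


private lemma small_var_right {φ : ℝ → ℝ} (hBV : BoundedVariationOn φ (Set.Icc 0 1))
    (hcont : ContinuousOn φ (Set.Icc 0 1)) {x : ℝ} (hx0 : 0 ≤ x) (hx1 : x < 1)
    {ε : ℝ} (hε : 0 < ε) :
    ∃ y, x < y ∧ y ≤ 1 ∧
      eVariationOn φ (Set.Icc 0 1 ∩ Set.Icc x y) < ENNReal.ofReal ε := by
  have hxs : x ∈ Set.Icc (0:ℝ) 1 := ⟨hx0, hx1.le⟩
  set t : Set ℝ := Set.Icc 0 1 ∩ Set.Icc x 1 with ht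
  set W : ℝ≥0∞ := eVariationOn φ t with hW
  have hWfin : W ≠ ⊤ := hBV.mono Set.inter_subset_left
  set ε' : ℝ≥0∞ := ENNReal.ofReal (ε/3) with hε'def
  have hε'pos : 0 < ε' := by
    simp only [hε'def, ENNReal.ofReal_pos]; linarith
  have hε'top : ε' ≠ ⊤ := ENNReal.ofReal_ne_top
  have h2e : ε' + ε' < ENNReal.ofReal ε := by
    rw [hε'def, ← ENNReal.ofReal_add (by linarith) (by linarith)]
    exact ENNReal.ofReal_lt_ofReal_iff hε |>.2 (by linarith)
  rcases le_or_gt W ε' with hWe | hWe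
  · exact ⟨1, hx1, le_rfl, lt_of_le_of_lt hWe (lt_of_le_of_lt le_self_add h2e)⟩
  -- choose a near-optimal partition
  have hsub : W - ε' < W := ENNReal.sub_lt_self hWfin (hε'pos.trans hWe).ne' hε'pos.ne'
  rw [hW, eVariationOn] at hsub
  obtain ⟨⟨n, u, hu, ut⟩, hsum⟩ := lt_iSup_iff.mp hsub
  simp only at hsum
  -- prepend x to the partition
  set w : ℕ → ℝ := fun i => if i = 0 then x else u (i - 1) with hwdef
  have hw0 : w 0 = x := rfl
  have hwx : ∀ i, x ≤ w i := by
    intro i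
    by_cases h : i = 0
    · simp [hwdef, h]
    · simpa [hwdef, h] using (ut (i-1)).2.1
  have hwt : ∀ i, w i ∈ t := by
    intro i
    by_cases h : i = 0
    · simpa [hwdef, h] using ⟨hxs, le_rfl, hx1.le⟩
    · simpa [hwdef, h] using ut (i-1)
  have hwmono : Monotone w := by
    apply monotone_nat_of_le_succ
    intro i
    rcases Nat.eq_zero_or_pos i with rfl | hi
    · simpa [hwdef] using hwx 1
    · have h1 : i ≠ 0 := hi.ne'
      have h2 : i + 1 ≠ 0 := Nat.succ_ne_zero i
      simp only [hwdef, if_neg h1, if_neg h2]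
      exact hu (by omega)
  set m : ℕ := n + 1 with hmdef
  have hsum2 : W - ε' < ∑ j ∈ Finset.range m, edist (φ (w (j+1))) (φ (w j)) := by
    refine hsum.trans_le ?_
    rw [hmdef, Finset.sum_range_succ']
    refine le_add_of_le_of_nonneg (le_of_eq (Finset.sum_congr rfl fun i _ => ?_)) zero_le
    simp [hwdef]
  -- find first index above x
  by_cases hex : ∃ j, x < w j
  · set J : ℕ := Nat.find hex with hJdef
    have hJ : x < w J := Nat.find_spec hex
    have hJeq : ∀ k < J, w k = x := fun k hk =>
      le_antisymm (not_lt.1 (Nat.find_min hex hk)) (hwx k)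
    have hJpos : 0 < J := by
      rcases Nat.eq_zero_or_pos J with h | h
      · rw [h] at hJ; rw [hw0] at hJ; exact absurd hJ (lt_irrefl x)
      · exact h
    have hJm : J ≤ m := by
      by_contra h
      push_neg at h
      have : ∀ j ∈ Finset.range m, edist (φ (w (j+1))) (φ (w j)) = 0 := by
        intro j hj
        rw [Finset.mem_range] at hj
        rw [hJeq j (by omega), hJeq (j+1) (by omega), edist_self]
      rw [Finset.sum_eq_zero this] at hsum2
      exact absurd hsum2 (by simp)
    -- continuity at x
    have hc : ContinuousWithinAt φ (Set.Icc 0 1) x := hcont x hxs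
    obtain ⟨δ, hδpos, hδ⟩ := Metric.continuousWithinAt_iff.1 hc (ε/3) (by linarith)
    set y : ℝ := min (w J) (x + δ/2) with hydef
    have hxy : x < y := lt_min hJ (by linarith)
    have hyJ : y ≤ w J := min_le_left _ _
    have hy1 : y ≤ 1 := hyJ.trans (hwt J).1.2
    have hys : y ∈ Set.Icc (0:ℝ) 1 := ⟨hx0.trans hxy.le, hy1⟩
    have hφy : edist (φ y) (φ x) < ε' := by
      rw [hε'def, edist_lt_ofReal]
      apply hδ hys
      rw [Real.dist_eq, abs_of_nonneg (by linarith)]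
      have : y ≤ x + δ/2 := min_le_right _ _
      linarith
    -- the new partition of Icc y 1
    set w' : ℕ → ℝ := fun i => if i = 0 then y else w (J + i - 1) with hw'def
    have hw'mem : ∀ i, w' i ∈ Set.Icc 0 1 ∩ Set.Icc y 1 := by
      intro i
      by_cases h : i = 0
      · simp only [hw'def, if_pos h]; exact ⟨hys, le_rfl, hy1⟩
      · have : y ≤ w (J + i - 1) := hyJ.trans (hwmono (by omega))
        simpa [hw'def, h] using ⟨(hwt _).1, this, (hwt _).1.2⟩
    have hw'mono : Monotone w' := by
      apply monotone_nat_of_le_succ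
      intro i
      rcases Nat.eq_zero_or_pos i with rfl | hi
      · simpa [hw'def] using hyJ.trans (hwmono (by omega))
      · simp only [hw'def, if_neg hi.ne', if_neg (Nat.succ_ne_zero i)]
        exact hwmono (by omega)
    have hnew : (∑ i ∈ Finset.range (m - J + 1), edist (φ (w' (i+1))) (φ (w' i)))
        ≤ eVariationOn φ (Set.Icc 0 1 ∩ Set.Icc y 1) :=
      eVariationOn.sum_le hw'mono hw'mem
    -- compare sums
    have hcomp : (∑ j ∈ Finset.range m, edist (φ (w (j+1))) (φ (w j)))
        ≤ ε' + ∑ i ∈ Finset.range (m - J + 1), edist (φ (w' (i+1))) (φ (w' i)) := by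
      have hsplit : (∑ j ∈ Finset.range m, edist (φ (w (j+1))) (φ (w j)))
          = ∑ j ∈ Finset.Ico (J-1) m, edist (φ (w (j+1))) (φ (w j)) := by
        rw [Finset.range_eq_Ico, ← Finset.sum_Ico_consecutive _ (Nat.zero_le (J-1)) (by omega)]
        have : ∀ j ∈ Finset.Ico 0 (J-1), edist (φ (w (j+1))) (φ (w j)) = 0 := by
          intro j hj
          rw [Finset.mem_Ico] at hj
          rw [hJeq j (by omega), hJeq (j+1) (by omega), edist_self]
        rw [Finset.sum_eq_zero this, zero_add]
      rw [hsplit, Finset.sum_eq_sum_Ico_succ_bot (by omega : J - 1 < m)]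
      have hJ1 : J - 1 + 1 = J := by omega
      rw [hJ1, hJeq (J-1) (by omega)]
      have hfirst : edist (φ (w J)) (φ x) ≤ edist (φ (w J)) (φ y) + ε' :=
        (edist_triangle _ _ _).trans (add_le_add le_rfl hφy.le)
      have htail : (∑ j ∈ Finset.Ico J m, edist (φ (w (j+1))) (φ (w j)))
          = ∑ i ∈ Finset.range (m - J), edist (φ (w' (i+2))) (φ (w' (i+1))) := by
        rw [Finset.sum_Ico_eq_sum_range]
        apply Finset.sum_congr rfl
        intro i _
        have e1 : w' (i+2) = w (J + i + 1) := by
          simp only [hw'def, if_neg (Nat.succ_ne_zero (i+1))]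
          congr 1 <;> omega
        have e2 : w' (i+1) = w (J + i) := by
          simp only [hw'def, if_neg (Nat.succ_ne_zero i)]
          congr 1 <;> omega
        rw [e1, e2]
      have hnewsum : (∑ i ∈ Finset.range (m - J + 1), edist (φ (w' (i+1))) (φ (w' i)))
          = edist (φ (w J)) (φ y) + ∑ i ∈ Finset.range (m - J), edist (φ (w' (i+2))) (φ (w' (i+1))) := by
        rw [Finset.sum_range_succ']
        rw [add_comm]
        congr 1
      rw [hnewsum, htail]
      calc edist (φ (w J)) (φ x) + ∑ j ∈ Finset.range (m - J), edist (φ (w' (j+2))) (φ (w' (j+1)))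
          ≤ (edist (φ (w J)) (φ y) + ε') + ∑ j ∈ Finset.range (m - J), edist (φ (w' (j+2))) (φ (w' (j+1))) := by
            exact add_le_add hfirst le_rfl
        _ = ε' + (edist (φ (w J)) (φ y) + ∑ j ∈ Finset.range (m - J), edist (φ (w' (j+2))) (φ (w' (j+1)))) := by
            ring
    -- conclude
    set Z : ℝ≥0∞ := eVariationOn φ (Set.Icc 0 1 ∩ Set.Icc y 1) with hZ
    have hZfin : Z ≠ ⊤ := hBV.mono Set.inter_subset_left
    have hWZ : eVariationOn φ (Set.Icc 0 1 ∩ Set.Icc x y) + Z = W := by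
      rw [hW, ht, hZ]
      exact eVariationOn.Icc_add_Icc φ hxy.le hy1 hys
    have hWlt : W < ε' + Z + ε' := by
      have h1 : W - ε' < ε' + Z := lt_of_lt_of_le (hsum2.trans_le hcomp) (add_le_add le_rfl hnew)
      calc W = (W - ε') + ε' := (tsub_add_cancel_of_le hWe.le).symm
        _ < (ε' + Z) + ε' := by
            exact (ENNReal.add_lt_add_iff_right hε'top).2 h1
    refine ⟨y, hxy, hy1, ?_⟩
    have : eVariationOn φ (Set.Icc 0 1 ∩ Set.Icc x y) + Z < (ε' + ε') + Z := by
      rw [hWZ]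
      calc W < ε' + Z + ε' := hWlt
        _ = (ε' + ε') + Z := by ring
    exact lt_of_lt_of_le ((ENNReal.add_lt_add_iff_right hZfin).1 this) h2e.le
  · -- all w j = x : sum is zero, contradiction
    push_neg at hex
    have hall : ∀ j, w j = x := fun j => le_antisymm (hex j) (hwx j)
    have : ∀ j ∈ Finset.range m, edist (φ (w (j+1))) (φ (w j)) = 0 := by
      intro j _; rw [hall j, hall (j+1), edist_self]
    rw [Finset.sum_eq_zero this] at hsum2
    exact absurd hsum2 (by simp)



private lemma refl_var (φ : ℝ → ℝ) (a b : ℝ) :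
    eVariationOn (fun z => φ (1 - z)) (Set.Icc 0 1 ∩ Set.Icc a b)
      = eVariationOn φ (Set.Icc 0 1 ∩ Set.Icc (1-b) (1-a)) := by
  have hanti : AntitoneOn (fun z : ℝ => 1 - z) (Set.Icc 0 1 ∩ Set.Icc a b) :=
    fun u _ v _ huv => by simp only; linarith
  have := eVariationOn.comp_eq_of_antitoneOn φ (fun z : ℝ => 1 - z) hanti
  rw [show (φ ∘ fun z : ℝ => 1 - z) = (fun z => φ (1 - z)) from rfl] at this
  rw [this]
  congr 1
  rw [Set.image_inter (sub_right_injective), Set.image_const_sub_Icc, Set.image_const_sub_Icc]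
  norm_num

private lemma small_var_left {φ : ℝ → ℝ} (hBV : BoundedVariationOn φ (Set.Icc 0 1))
    (hcont : ContinuousOn φ (Set.Icc 0 1)) {x : ℝ} (hx0 : 0 < x) (hx1 : x ≤ 1)
    {ε : ℝ} (hε : 0 < ε) :
    ∃ y, 0 ≤ y ∧ y < x ∧
      eVariationOn φ (Set.Icc 0 1 ∩ Set.Icc y x) < ENNReal.ofReal ε := by
  set g : ℝ → ℝ := fun z => φ (1 - z) with hg
  have hicc : Set.Icc (0:ℝ) 1 ∩ Set.Icc 0 1 = Set.Icc (0:ℝ) 1 := Set.inter_self _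
  have hgBV : BoundedVariationOn g (Set.Icc 0 1) := by
    unfold BoundedVariationOn
    rw [← hicc, refl_var φ 0 1]
    simpa [BoundedVariationOn] using hBV
  have hgcont : ContinuousOn g (Set.Icc 0 1) := by
    apply hcont.comp ((continuous_const.sub continuous_id).continuousOn)
    intro z hz
    constructor <;> [skip; skip] <;> simp at hz ⊢ <;> linarith [hz.1, hz.2]
  obtain ⟨y', hy1', hy2', hy3'⟩ := small_var_right hgBV hgcont
    (by linarith : (0:ℝ) ≤ 1 - x) (by linarith : 1 - x < 1) hε
  refine ⟨1 - y', by linarith, by linarith, ?_⟩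
  have := refl_var φ (1 - x) y'
  rw [this] at hy3'
  have he : 1 - (1 - x) = x := by ring
  rw [he] at hy3'
  exact hy3'



private lemma var_contOn {φ : ℝ → ℝ} (hBV : BoundedVariationOn φ (Set.Icc 0 1))
    (hcont : ContinuousOn φ (Set.Icc 0 1)) :
    ContinuousOn (fun x => variationOnFromTo φ (Set.Icc 0 1) 0 x) (Set.Icc 0 1) := by
  have hloc : LocallyBoundedVariationOn φ (Set.Icc 0 1) := hBV.locallyBoundedVariationOn
  have h0s : (0:ℝ) ∈ Set.Icc (0:ℝ) 1 := ⟨le_rfl, zero_le_one⟩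
  set v : ℝ → ℝ := fun x => variationOnFromTo φ (Set.Icc 0 1) 0 x with hv
  have hmono : MonotoneOn v (Set.Icc 0 1) := variationOnFromTo.monotoneOn hloc h0s
  intro x hx
  rw [ContinuousWithinAt]
  rw [tendsto_order]
  constructor
  · -- ∀ c < v x, eventually c < v z
    intro c hc
    rcases eq_or_lt_of_le hx.1 with h0x | h0x
    · -- x = 0 : v z ≥ 0 = v x > c for all z
      have hv0 : v x = 0 := by rw [hv, ← h0x]; exact variationOnFromTo.self φ _ 0
      rw [hv0] at hc
      filter_upwards [self_mem_nhdsWithin] with z hz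
      exact hc.trans_le (variationOnFromTo.nonneg_of_le φ _ hz.1)
    · -- x > 0 : use small_var_left
      obtain ⟨y, hy0, hyx, hyvar⟩ := small_var_left hBV hcont h0x hx.2
        (sub_pos.2 hc : (0:ℝ) < v x - c)
      have hys : y ∈ Set.Icc (0:ℝ) 1 := ⟨hy0, hyx.le.trans hx.2⟩
      have hvar : variationOnFromTo φ (Set.Icc 0 1) y x < v x - c := by
        rw [variationOnFromTo.eq_of_le φ _ hyx.le]
        rw [← ENNReal.lt_ofReal_iff_toReal_lt (hloc y x hys hx)]
        exact hyvar
      have hadd : v y + variationOnFromTo φ (Set.Icc 0 1) y x = v x :=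
        variationOnFromTo.add hloc h0s hys hx
      have hcy : c < v y := by linarith
      filter_upwards [self_mem_nhdsWithin,
        mem_nhdsWithin_of_mem_nhds (Ioi_mem_nhds hyx)] with z hz hz'
      calc c < v y := hcy
        _ ≤ v z := hmono hys hz (le_of_lt hz')
  · intro c hc
    rcases eq_or_lt_of_le hx.2 with h1x | h1x
    · -- x = 1
      filter_upwards [self_mem_nhdsWithin] with z hz
      exact lt_of_le_of_lt (hmono hz hx (h1x ▸ hz.2)) hc
    · obtain ⟨y, hxy, hy1, hyvar⟩ := small_var_right hBV hcont hx.1 h1x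
        (sub_pos.2 hc : (0:ℝ) < c - v x)
      have hys : y ∈ Set.Icc (0:ℝ) 1 := ⟨hx.1.trans hxy.le, hy1⟩
      have hvar : variationOnFromTo φ (Set.Icc 0 1) x y < c - v x := by
        rw [variationOnFromTo.eq_of_le φ _ hxy.le]
        rw [← ENNReal.lt_ofReal_iff_toReal_lt (hloc x y hx hys)]
        exact hyvar
      have hadd : v x + variationOnFromTo φ (Set.Icc 0 1) x y = v y :=
        variationOnFromTo.add hloc h0s hx hys
      have hcy : v y < c := by linarith
      filter_upwards [self_mem_nhdsWithin,
        mem_nhdsWithin_of_mem_nhds (Iio_mem_nhds hxy)] with z hz hz'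
      calc v z ≤ v y := hmono hz hys (le_of_lt hz')
        _ < c := hcy



private lemma polya {F : ℕ → ℝ → ℝ} {ψ : ℝ → ℝ}
    (hF : ∀ N, Monotone (F N))
    (hψ : ContinuousOn ψ (Set.Icc 0 1))
    (hlim : ∀ x ∈ Set.Icc (0:ℝ) 1, Tendsto (fun N => F N x) atTop (nhds (ψ x)))
    {ε : ℝ} (hε : 0 < ε) :
    ∀ᶠ N in atTop, ∀ x ∈ Set.Icc (0:ℝ) 1, |F N x - ψ x| < ε := by
  obtain ⟨δ, hδpos, hδ⟩ := Metric.uniformContinuousOn_iff.1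
    (isCompact_Icc.uniformContinuousOn_of_continuous hψ) (ε/3) (by linarith)
  obtain ⟨n, hn⟩ := exists_nat_gt (1/δ)
  have hnpos : 0 < (n:ℝ) := lt_trans (by positivity) hn
  have hn1 : 1 ≤ n := by by_contra h; push_neg at h; interval_cases n <;> simp_all

  have hinv : 1/(n:ℝ) < δ := by
    rw [div_lt_iff₀ hnpos]
    rw [div_lt_iff₀ hδpos] at hn
    linarith [mul_comm (n:ℝ) δ]
  have hgrid : ∀ i : ℕ, i ≤ n → ((i:ℝ)/n) ∈ Set.Icc (0:ℝ) 1 := by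
    intro i hi
    constructor
    · positivity
    · rw [div_le_one hnpos]; exact_mod_cast hi
  have key : ∀ᶠ N in atTop, ∀ i ∈ Finset.range (n+1), |F N ((i:ℝ)/n) - ψ ((i:ℝ)/n)| < ε/3 := by
    rw [Filter.eventually_all_finset]
    intro i hi
    rw [Finset.mem_range] at hi
    have hmem := hgrid i (by omega)
    have := Metric.tendsto_nhds.1 (hlim _ hmem) (ε/3) (by linarith)
    simpa [Real.dist_eq] using this
  filter_upwards [key] with N hN x hx
  set i : ℕ := min (⌊x * n⌋₊) (n - 1) with hi
  have hin : i + 1 ≤ n := by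
    have : i ≤ n - 1 := min_le_right _ _
    omega
  set a : ℝ := (i:ℝ)/n with ha
  set b : ℝ := ((i+1:ℕ):ℝ)/n with hb
  have hax : a ≤ x := by
    rw [ha, div_le_iff₀ hnpos]
    have h1 : (i:ℝ) ≤ ⌊x * n⌋₊ := by exact_mod_cast min_le_left _ _
    have h2 : (⌊x * n⌋₊ : ℝ) ≤ x * n := Nat.floor_le (mul_nonneg hx.1 hnpos.le)
    linarith
  have hxb : x ≤ b := by
    rcases le_or_gt (⌊x * n⌋₊) (n-1) with h | h
    · have hieq : i = ⌊x * n⌋₊ := min_eq_left h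
      have := Nat.lt_floor_add_one (x * n)
      rw [hb, le_div_iff₀ hnpos]
      rw [hieq]
      push_cast
      linarith
    · have hieq : i = n - 1 := min_eq_right (by omega)
      have : i + 1 = n := by omega
      rw [hb, this]
      rw [le_div_iff₀ hnpos]
      have := hx.2
      nlinarith
  have hamem : a ∈ Set.Icc (0:ℝ) 1 := hgrid i (by omega)
  have hbmem : b ∈ Set.Icc (0:ℝ) 1 := hgrid (i+1) hin
  have hba : b - a = 1/n := by rw [hb, ha]; push_cast; ring
  have hFa := hN i (Finset.mem_range.2 (by omega))
  have hFb := hN (i+1) (Finset.mem_range.2 (by omega))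
  have hψb : |ψ b - ψ x| < ε/3 := by
    have := hδ b hbmem x hx (by rw [Real.dist_eq, abs_of_nonneg (by linarith)]; linarith)
    rwa [Real.dist_eq] at this
  have hψa : |ψ a - ψ x| < ε/3 := by
    have := hδ a hamem x hx (by rw [Real.dist_eq, abs_of_nonpos (by linarith)]; linarith)
    rwa [Real.dist_eq] at this
  have h1 : F N x ≤ F N b := hF N hxb
  have h2 : F N a ≤ F N x := hF N hax
  rw [abs_lt] at hFa hFb hψa hψb ⊢
  constructor <;> linarith



private lemma indicator_Ico_split {a b t : ℝ} (ha : 0 ≤ a) (hab : a ≤ b) (ht : 0 ≤ t) :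
    Set.indicator (Set.Ico a b) (fun _ => (1:ℝ)) t
      = Set.indicator (Set.Ico 0 b) (fun _ => (1:ℝ)) t
        - Set.indicator (Set.Ico 0 a) (fun _ => (1:ℝ)) t := by
  simp only [Set.indicator_apply, Set.mem_Ico]
  rcases lt_or_ge t a with h | h
  · rw [if_neg (fun hc => absurd hc.1 (not_le.2 h)), if_pos ⟨ht, lt_of_lt_of_le h hab⟩,
      if_pos ⟨ht, h⟩]
    norm_num
  · rcases lt_or_ge t b with h' | h'
    · rw [if_pos ⟨h, h'⟩, if_pos ⟨ht, h'⟩, if_neg (fun hc => absurd hc.2 (not_lt.2 h))]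
      norm_num
    · rw [if_neg (fun hc => absurd hc.2 (not_lt.2 h')),
        if_neg (fun hc => absurd hc.2 (not_lt.2 h')),
        if_neg (fun hc => absurd hc.2 (not_lt.2 (hab.trans h')))]
      norm_num

private lemma abs_sub_le_var {φ : ℝ → ℝ} (hloc : LocallyBoundedVariationOn φ (Set.Icc 0 1))
    {b c : ℝ} (hb : b ∈ Set.Icc (0:ℝ) 1) (hc : c ∈ Set.Icc (0:ℝ) 1) (hbc : b ≤ c) :
    |φ c - φ b| ≤ variationOnFromTo φ (Set.Icc 0 1) b c := by
  rw [show |φ c - φ b| = dist (φ b) (φ c) by rw [dist_comm, Real.dist_eq]]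
  rw [variationOnFromTo.eq_of_le φ _ hbc, dist_edist]
  apply ENNReal.toReal_mono (hloc b c hb hc)
  apply eVariationOn.edist_le φ
  exacts [⟨hb, le_rfl, hbc⟩, ⟨hc, hbc, le_rfl⟩]

theorem stmt18 (φ : ℝ → ℝ)
    (hcont : ContinuousOn φ (Set.Icc 0 1))
    (hBV : BoundedVariationOn φ (Set.Icc 0 1))
    (hφ0 : φ 0 = 0) (hV : variationOnFromTo φ (Set.Icc 0 1) 0 1 = 1)
    (xs : ℕ → ℝ) (hxs : ∀ k, xs k ∈ Set.Icc (0 : ℝ) 1)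
    (ε : ℕ → ℝ) (hε : ∀ k, ε k = 1 ∨ ε k = -1)
    (hv : ∀ x ∈ Set.Icc (0 : ℝ) 1,
      Tendsto (fun N : ℕ => (N : ℝ)⁻¹ *
          ∑ k ∈ Finset.range N, Set.indicator (Set.Ico 0 x) (fun _ => (1 : ℝ)) (xs k))
        atTop (nhds (variationOnFromTo φ (Set.Icc 0 1) 0 x)))
    (hφ : ∀ x ∈ Set.Icc (0 : ℝ) 1,
      Tendsto (fun N : ℕ => (N : ℝ)⁻¹ *
          ∑ k ∈ Finset.range N, ε k * Set.indicator (Set.Ico 0 x) (fun _ => (1 : ℝ)) (xs k))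
        atTop (nhds (φ x))) :
    Tendsto (fun N : ℕ =>
        ⨆ q : {q : ℝ × ℝ // 0 ≤ q.1 ∧ q.1 < q.2 ∧ q.2 ≤ 1},
          |(N : ℝ)⁻¹ *
              (∑ k ∈ Finset.range N,
                ε k * Set.indicator (Set.Ico (q : ℝ × ℝ).1 (q : ℝ × ℝ).2) (fun _ => (1 : ℝ)) (xs k))
            - (φ (q : ℝ × ℝ).2 - φ (q : ℝ × ℝ).1)|)
      atTop (nhds 0) := by
  have hloc : LocallyBoundedVariationOn φ (Set.Icc 0 1) := hBV.locallyBoundedVariationOn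
  have h0s : (0:ℝ) ∈ Set.Icc (0:ℝ) 1 := ⟨le_rfl, zero_le_one⟩
  set v : ℝ → ℝ := fun x => variationOnFromTo φ (Set.Icc 0 1) 0 x with hvdef
  have hvcont : ContinuousOn v (Set.Icc 0 1) := var_contOn hBV hcont
  set T : ℕ → ℝ → ℝ := fun N x => (N : ℝ)⁻¹ *
      ∑ k ∈ Finset.range N, Set.indicator (Set.Ico 0 x) (fun _ => (1 : ℝ)) (xs k) with hTdef
  set S : ℕ → ℝ → ℝ := fun N x => (N : ℝ)⁻¹ *
      ∑ k ∈ Finset.range N, ε k * Set.indicator (Set.Ico 0 x) (fun _ => (1 : ℝ)) (xs k) with hSdef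
  -- generic monotonicity
  have hmono : ∀ (N : ℕ) (c : ℕ → ℝ), (∀ k, 0 ≤ c k) → Monotone (fun x => (N : ℝ)⁻¹ *
      ∑ k ∈ Finset.range N, c k * Set.indicator (Set.Ico 0 x) (fun _ => (1 : ℝ)) (xs k)) := by
    intro N c hc x y hxy
    apply mul_le_mul_of_nonneg_left _ (by positivity)
    apply Finset.sum_le_sum
    intro k _
    exact mul_le_mul_of_nonneg_left
      (Set.indicator_le_indicator_of_subset (Set.Ico_subset_Ico_right hxy)
        (fun _ => zero_le_one) _) (hc k)
  have hFmono : ∀ N, Monotone (fun x => T N x + S N x) := by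
    intro N
    have heq : (fun x => T N x + S N x) = (fun x => (N : ℝ)⁻¹ *
        ∑ k ∈ Finset.range N, (1 + ε k) * Set.indicator (Set.Ico 0 x) (fun _ => (1 : ℝ)) (xs k)) := by
      funext x
      rw [hTdef, hSdef]
      simp only
      rw [← mul_add, ← Finset.sum_add_distrib]
      congr 1
      apply Finset.sum_congr rfl
      intro k _
      ring
    rw [heq]
    apply hmono N _ (fun k => by rcases hε k with h | h <;> rw [h] <;> norm_num)
  have hGmono : ∀ N, Monotone (fun x => T N x - S N x) := by
    intro N
    have heq : (fun x => T N x - S N x) = (fun x => (N : ℝ)⁻¹ *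
        ∑ k ∈ Finset.range N, (1 - ε k) * Set.indicator (Set.Ico 0 x) (fun _ => (1 : ℝ)) (xs k)) := by
      funext x
      rw [hTdef, hSdef]
      simp only
      rw [← mul_sub, ← Finset.sum_sub_distrib]
      congr 1
      apply Finset.sum_congr rfl
      intro k _
      ring
    rw [heq]
    apply hmono N _ (fun k => by rcases hε k with h | h <;> rw [h] <;> norm_num)
  rw [Metric.tendsto_nhds]
  intro η hη
  have hp := polya (F := fun N x => T N x + S N x) (ψ := fun x => v x + φ x) hFmono
    (hvcont.add hcont) (fun x hx => (hv x hx).add (hφ x hx)) (by linarith : (0:ℝ) < η/4)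
  have hm := polya (F := fun N x => T N x - S N x) (ψ := fun x => v x - φ x) hGmono
    (hvcont.sub hcont) (fun x hx => (hv x hx).sub (hφ x hx)) (by linarith : (0:ℝ) < η/4)
  filter_upwards [hp, hm] with N hpN hmN
  have hS4 : ∀ x ∈ Set.Icc (0:ℝ) 1, |S N x - φ x| < η/4 := by
    intro x hx
    have h1 := abs_lt.1 (hpN x hx)
    have h2 := abs_lt.1 (hmN x hx)
    rw [abs_lt]
    constructor <;> linarith
  -- bound each term of the sup
  have hterm : ∀ q : {q : ℝ × ℝ // 0 ≤ q.1 ∧ q.1 < q.2 ∧ q.2 ≤ 1},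
      |(N : ℝ)⁻¹ * (∑ k ∈ Finset.range N,
          ε k * Set.indicator (Set.Ico (q : ℝ × ℝ).1 (q : ℝ × ℝ).2) (fun _ => (1 : ℝ)) (xs k))
        - (φ (q : ℝ × ℝ).2 - φ (q : ℝ × ℝ).1)| ≤ η/2 := by
    rintro ⟨⟨a, b⟩, ha0, hab, hb1⟩
    simp only
    have hsum : (N : ℝ)⁻¹ * (∑ k ∈ Finset.range N,
        ε k * Set.indicator (Set.Ico a b) (fun _ => (1 : ℝ)) (xs k)) = S N b - S N a := by
      rw [hSdef]
      simp only
      rw [← mul_sub, ← Finset.sum_sub_distrib]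
      congr 1
      apply Finset.sum_congr rfl
      intro k _
      rw [indicator_Ico_split ha0 hab.le (hxs k).1]
      ring
    rw [hsum]
    have hamem : a ∈ Set.Icc (0:ℝ) 1 := ⟨ha0, hab.le.trans hb1⟩
    have hbmem : b ∈ Set.Icc (0:ℝ) 1 := ⟨ha0.trans hab.le, hb1⟩
    have h1 := hS4 a hamem
    have h2 := hS4 b hbmem
    calc |S N b - S N a - (φ b - φ a)| = |(S N b - φ b) - (S N a - φ a)| := by ring_nf
      _ ≤ |S N b - φ b| + |S N a - φ a| := abs_sub _ _
      _ ≤ η/2 := by linarith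
  have hne : Nonempty {q : ℝ × ℝ // 0 ≤ q.1 ∧ q.1 < q.2 ∧ q.2 ≤ 1} :=
    ⟨⟨(0, 1), le_rfl, zero_lt_one, le_rfl⟩⟩
  have hub : (⨆ q : {q : ℝ × ℝ // 0 ≤ q.1 ∧ q.1 < q.2 ∧ q.2 ≤ 1},
      |(N : ℝ)⁻¹ * (∑ k ∈ Finset.range N,
          ε k * Set.indicator (Set.Ico (q : ℝ × ℝ).1 (q : ℝ × ℝ).2) (fun _ => (1 : ℝ)) (xs k))
        - (φ (q : ℝ × ℝ).2 - φ (q : ℝ × ℝ).1)|) ≤ η/2 := ciSup_le hterm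
  have hlb : (0:ℝ) ≤ ⨆ q : {q : ℝ × ℝ // 0 ≤ q.1 ∧ q.1 < q.2 ∧ q.2 ≤ 1},
      |(N : ℝ)⁻¹ * (∑ k ∈ Finset.range N,
          ε k * Set.indicator (Set.Ico (q : ℝ × ℝ).1 (q : ℝ × ℝ).2) (fun _ => (1 : ℝ)) (xs k))
        - (φ (q : ℝ × ℝ).2 - φ (q : ℝ × ℝ).1)| := by
    refine le_ciSup_of_le ⟨η/2, ?_⟩ hne.some (abs_nonneg _)
    rintro r ⟨q, rfl⟩
    exact hterm q
  rw [Real.dist_eq, sub_zero, abs_of_nonneg hlb]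
  linarith
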